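/- For every resource contribution game G, profile P and player i, if P is contentious for player i (P ∈ cont-prof(G,i)), then there exists a player j ≠ i such that P is contentious for player j (P ∈ cont-prof(G,j)). -/

import Mathlib

open scoped Classical

/-- A resource contribution game over atomic resource type `Res` with player set `ι`:
each player has a goal (a resource bundle, i.e. a multiset of atomic resources) and
an endowment (a resource bag, i.e. a multiset of resource bundles). -/
structure RCG (Res ι : Type*) where
  goal : ι → Multiset Res
  endow : ι → Multiset (Multiset Res)

namespace RCG

variable {Res ι : Type*} [Fintype ι]

/-- A profile assigns to each player a bag (his contribution). -/
abbrev Profile (Res ι : Type*) := ι → Multiset (Multiset Res)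

/-- Outcome of a profile: the multiset sum of all contributions. -/
def out (P : Profile Res ι) : Multiset (Multiset Res) := ∑ i, P i

/-- The bag `X` can be transformed into the bundle `B`: `♭(B) ⊆ ♭•(X)`. -/
def Trans (X : Multiset (Multiset Res)) (B : Multiset Res) : Prop := B ≤ X.sum

/-- Player `i` is potentially satisfied by profile `P`. -/
def Psat (G : RCG Res ι) (P : Profile Res ι) (i : ι) : Prop :=
  Trans (out P) (G.goal i)

/-- The set of players potentially satisfied by `P`. -/
noncomputable def psatPlayers (G : RCG Res ι) (P : Profile Res ι) : Finset ι :=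
  Finset.univ.filter fun i => Psat G P i

/-- The profile `P` is contentious. -/
def Contentious (G : RCG Res ι) (P : Profile Res ι) : Prop :=
  ¬ Trans (out P) (∑ j ∈ psatPlayers G P, G.goal j)

/-- Restriction of bundle `B` to the resource types occurring in `C`. -/
noncomputable def restr (B C : Multiset Res) : Multiset Res := B.filter (· ∈ C)

/-- The profile `P` is contentious for player `i`. -/
def ContentiousFor (G : RCG Res ι) (P : Profile Res ι) (i : ι) : Prop :=
  Psat G P i ∧ ¬ Trans (out P) (∑ j ∈ psatPlayers G P, restr (G.goal j) (G.goal i))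

/-- The three kinds of preferences: contention-tolerant, (public) contention-averse,
private contention-averse. -/
inductive Pref | ct | ca | pca

/-- `P` is a good profile for player `i` according to preference kind `pref`. -/
def Good (pref : Pref) (G : RCG Res ι) (P : Profile Res ι) (i : ι) : Prop :=
  match pref with
  | .ct => Psat G P i
  | .ca => Psat G P i ∧ ¬ Contentious G P
  | .pca => Psat G P i ∧ ¬ ContentiousFor G P i

/-- Player `i` strictly prefers `P` over `Q` (i.e. `Q ≺^pref_i P`). -/
def Prefers (pref : Pref) (G : RCG Res ι) (i : ι) (Q P : Profile Res ι) : Prop :=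
  (¬ Good pref G P i ∧ ¬ Good pref G Q i ∧ P i < Q i) ∨
  (Good pref G P i ∧ ¬ Good pref G Q i) ∨
  (Good pref G P i ∧ Good pref G Q i ∧ P i < Q i)

/-- `C` is a profitable deviation for player `i` from profile `P`. -/
noncomputable def ProfDev (pref : Pref) (G : RCG Res ι) (P : Profile Res ι) (i : ι)
    (C : Multiset (Multiset Res)) : Prop :=
  C ≤ G.endow i ∧ Prefers pref G i P (Function.update P i C)

/-- `P` is a pure Nash equilibrium of `G` according to `pref`:
`P` is a profile of `G` and no player has a profitable deviation. -/
noncomputable def NE (pref : Pref) (G : RCG Res ι) (P : Profile Res ι) : Prop :=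
  (∀ i, P i ≤ G.endow i) ∧ ∀ i C, ¬ ProfDev pref G P i C

/-- `G` is an RCG with endowments as bags of atomic resources. -/
def IsRCGBAR (G : RCG Res ι) : Prop :=
  ∀ i, ∀ B ∈ G.endow i, ∃ r : Res, B = {r}

/-- `G` has independent objectives. -/
def IndepObjectives (G : RCG Res ι) : Prop :=
  ∀ i j : ι, i ≠ j → ∀ r : Res, r ∈ G.goal i → r ∉ G.goal j

end RCG

/-- if `P` is contentious for player `i`, then it is contentious for some
other player `j ≠ i`. -/
theorem contentiousFor_exists_other {Res ι : Type*} [Fintype ι]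
    (G : RCG Res ι) (P : RCG.Profile Res ι) (hP : ∀ k, P k ≤ G.endow k) (i : ι)
    (h : RCG.ContentiousFor G P i) :
    ∃ j : ι, j ≠ i ∧ RCG.ContentiousFor G P j := by
  classical
  obtain ⟨hi, hnc⟩ := h
  set S := RCG.psatPlayers G P with hS
  have hiS : i ∈ S := by
    simp [hS, RCG.psatPlayers, hi]
  rw [RCG.Trans, Multiset.le_iff_count] at hnc
  push_neg at hnc
  obtain ⟨r, hr⟩ := hnc
  have hcount : ∀ (g : Multiset Res),
      Multiset.count r (∑ j ∈ S, RCG.restr (G.goal j) g)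
        = ∑ j ∈ S, (if r ∈ g then Multiset.count r (G.goal j) else 0) := by
    intro g
    rw [Multiset.count_sum']
    refine Finset.sum_congr rfl fun j _ => ?_
    simp [RCG.restr, Multiset.count_filter]
  rw [hcount] at hr
  have hri : r ∈ G.goal i := by
    by_contra hri
    simp [hri] at hr
  rw [Finset.sum_ite_of_true (fun j _ => hri)] at hr
  -- find j ≠ i in S with r ∈ goal j
  have hgi : Multiset.count r (G.goal i) ≤ Multiset.count r (RCG.out P).sum :=
    Multiset.le_iff_count.mp hi r
  have hex : ∃ j ∈ S, j ≠ i ∧ r ∈ G.goal j := by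
    by_contra hno
    push_neg at hno
    have : ∑ j ∈ S, Multiset.count r (G.goal j) = Multiset.count r (G.goal i) := by
      rw [← Finset.sum_subset (Finset.singleton_subset_iff.mpr hiS)]
      · simp
      · intro j hj hji
        have := hno j hj (by simpa using hji)
        simpa [Multiset.count_eq_zero] using this
    omega
  obtain ⟨j, hjS, hji, hrj⟩ := hex
  refine ⟨j, hji, ?_, ?_⟩
  · simp [hS, RCG.psatPlayers] at hjS
    exact hjS
  · intro hT
    have := Multiset.le_iff_count.mp hT r
    rw [hcount] at this
    rw [Finset.sum_ite_of_true (fun k _ => hrj)] at this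
    omega
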